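/- The L²(dp) norm of the random variable T_N = ∑ (1 / (|j_1|²·|j_3|·|j_4|)) · g_{j_1} g_{j_2} g_{j_3} g_{j_4}, where the sum runs over all (j_1,j_2,j_3,j_4) ∈ 𝒜_4 with 0 < |j_k| ≤ N for all k, j_1 > 0, j_2 > 0, j_3 < 0, j_4 < 0 and |j_3 + j_4| > N, converges to 0 as N → ∞. -/

import Mathlib

open MeasureTheory ProbabilityTheory

/-- The family `(g_n)_{n ∈ ℤ \ {0}}` of centered complex Gaussian random
variables from the paper: `g_n = c (h_n + i l_n)` for `n > 0`, where
`(h_n)_{n>0}` and `(l_n)_{n>0}` are mutually independent standard real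
Gaussians `N(0,1)`, and `g_{-n} = conj (g_n)` for `n > 0`. -/
structure GaussianData (Ω : Type*) [MeasurableSpace Ω] (p : Measure Ω) where
  c : ℝ
  c_pos : 0 < c
  h : ℤ → Ω → ℝ
  l : ℤ → Ω → ℝ
  g : ℤ → Ω → ℂ
  g_def : ∀ n : ℤ, 0 < n → ∀ ω, g n ω = (c : ℂ) * ((h n ω : ℂ) + Complex.I * (l n ω : ℂ))
  g_neg : ∀ n : ℤ, 0 < n → ∀ ω, g (-n) ω = starRingEnd ℂ (g n ω)
  h_meas : ∀ n : ℤ, 0 < n → Measurable (h n)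
  l_meas : ∀ n : ℤ, 0 < n → Measurable (l n)
  h_law : ∀ n : ℤ, 0 < n → p.map (h n) = gaussianReal 0 1
  l_law : ∀ n : ℤ, 0 < n → p.map (l n) = gaussianReal 0 1
  indep : iIndepFun
      (fun nb : {n : ℤ // 0 < n} × Bool => if nb.2 then l nb.1.1 else h nb.1.1) p

open Finset

lemma Icc_insert_top (k N : ℤ) (h : k ≤ N + 1) :
    Finset.Icc k (N + 1) = insert (N + 1) (Finset.Icc k N) := by
  ext x; simp only [Finset.mem_Icc, Finset.mem_insert]; omega

lemma L1 (k N : ℤ) (hk : 1 ≤ k) :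
    ∑ x ∈ Finset.Icc k N, (((x : ℝ)) ^ 2)⁻¹ ≤ 2 / (k : ℝ) := by
  have hk' : (1 : ℝ) ≤ (k : ℝ) := by exact_mod_cast hk
  have key : ∀ m : ℕ, ∑ x ∈ Finset.Icc k (k + m), (((x : ℝ)) ^ 2)⁻¹
      ≤ 2 / (k : ℝ) - 1 / ((k : ℝ) + m) := by
    intro m
    induction m with
    | zero =>
      simp only [Nat.cast_zero, add_zero, Finset.Icc_self, Finset.sum_singleton]
      rw [show 2 / (k:ℝ) - 1 / (k:ℝ) = 1 / k by ring, inv_eq_one_div,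
        div_le_div_iff₀ (by positivity) (by positivity)]
      nlinarith
    | succ m ih =>
      rw [show k + ((m + 1 : ℕ) : ℤ) = (k + m) + 1 by push_cast; ring,
        Icc_insert_top k (k + m) (by omega), Finset.sum_insert (by simp)]
      have hm : (0:ℝ) < (k:ℝ) + m := by positivity
      have key2 : (((k : ℝ) + m + 1) ^ 2)⁻¹ ≤ 1 / ((k:ℝ) + m) - 1 / ((k:ℝ) + m + 1) := by
        rw [show 1 / ((k:ℝ)+m) - 1 / ((k:ℝ)+m+1) = 1 / (((k:ℝ)+m) * ((k:ℝ)+m+1)) by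
          field_simp; ring, inv_eq_one_div, div_le_div_iff₀ (by positivity) (by positivity)]
        nlinarith
      push_cast
      push_cast at ih
      rw [show ((k:ℝ) + ((m:ℝ) + 1)) = (k:ℝ) + (m:ℝ) + 1 by ring]
      linarith
  rcases lt_or_ge N k with h | h
  · rw [Finset.Icc_eq_empty (by omega)]
    simp
    positivity
  · obtain ⟨m, hm⟩ : ∃ m : ℕ, N = k + m := ⟨(N - k).toNat, by omega⟩
    subst hm
    have h2 : (0:ℝ) < (k:ℝ) + m := by positivity
    have h3 : 1 / ((k:ℝ) + m) ≥ 0 := by positivity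
    linarith [key m]

lemma L2 (N : ℕ) : ∑ t ∈ Finset.Icc (1 : ℤ) (N : ℤ), ((t : ℝ))⁻¹ ≤ 1 + Real.log N := by
  induction N with
  | zero => simp
  | succ N ih =>
    rcases Nat.eq_zero_or_pos N with rfl | hN
    · norm_num
    · have hstep : Real.log N + ((N : ℝ) + 1)⁻¹ ≤ Real.log (N + 1) := by
        have hN' : (0 : ℝ) < N := by exact_mod_cast hN
        have h1 : Real.log ((N : ℝ) / ((N : ℝ) + 1)) ≤ (N : ℝ) / ((N : ℝ) + 1) - 1 :=
          Real.log_le_sub_one_of_pos (by positivity)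
        rw [Real.log_div (by positivity) (by positivity)] at h1
        have h2 : (N : ℝ) / ((N : ℝ) + 1) - 1 = - (((N:ℝ)+1)⁻¹) := by field_simp; ring
        rw [h2] at h1
        linarith
      rw [show ((N + 1 : ℕ) : ℤ) = (N : ℤ) + 1 by push_cast; ring,
        Icc_insert_top 1 N (by omega), Finset.sum_insert (by simp)]
      push_cast
      linarith

lemma key_ineq {A B K n : ℝ} (hA : 0 < A) (hB : 0 < B) (hK : 0 < K) (hn : 0 < n)
    (h : n < A + B) :
    A⁻¹ * B⁻¹ * (2 / K) ≤ 4 / n * (A⁻¹ + B⁻¹) * K⁻¹ := by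
  have e : A⁻¹ + B⁻¹ = (A + B) * (A⁻¹ * B⁻¹) := by field_simp; ring
  rw [e]
  rw [show 4 / n * ((A + B) * (A⁻¹ * B⁻¹)) * K⁻¹ = A⁻¹ * B⁻¹ * ((4 * (A+B) / n) * K⁻¹) by ring]
  apply mul_le_mul_of_nonneg_left _ (by positivity)
  rw [div_eq_mul_inv 2 K]
  apply mul_le_mul_of_nonneg_right _ (inv_nonneg.mpr hK.le)
  rw [le_div_iff₀ hn]
  nlinarith

lemma inner_claim (N a : ℤ) (haN : a ≤ N) :
    ∑ b ∈ Finset.Icc (1:ℤ) N, (if N < a + b then (((a + b - N : ℤ) : ℝ))⁻¹ else 0)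
      ≤ ∑ t ∈ Finset.Icc (1:ℤ) N, ((t : ℝ))⁻¹ := by
  rw [Finset.sum_ite, Finset.sum_const_zero, add_zero]
  have h1 : ∑ b ∈ ((Finset.Icc (1:ℤ) N).filter fun b => N < a + b),
        (((a + b - N : ℤ) : ℝ))⁻¹
      = ∑ t ∈ ((Finset.Icc (1:ℤ) N).filter fun b => N < a + b).image
          (fun b => a + b - N), ((t : ℝ))⁻¹ :=
    (Finset.sum_image (s := (Finset.Icc (1:ℤ) N).filter fun b => N < a + b)
      (f := fun t : ℤ => ((t : ℝ))⁻¹) (g := fun b => a + b - N)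
      (fun x _ y _ hxy => by simp only [] at hxy; omega)).symm
  rw [h1]
  apply Finset.sum_le_sum_of_subset_of_nonneg
  · intro t ht
    obtain ⟨b, hb, rfl⟩ := Finset.mem_image.mp ht
    simp only [Finset.mem_filter, Finset.mem_Icc] at hb
    simp only [Finset.mem_Icc]
    omega
  · intro t ht _
    simp only [Finset.mem_Icc] at ht
    have : (0:ℝ) < (t:ℝ) := by exact_mod_cast (by omega : (0:ℤ) < t)
    positivity

lemma inner_x_bound (N a b : ℤ) (ha : 1 ≤ a) (hb : 1 ≤ b) (hN : 1 ≤ N) :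
    ∑ x ∈ Finset.Icc (1:ℤ) N,
        (if (N:ℤ) < a + b ∧ a + b ≤ N + x then (((x:ℝ))^2 * (a:ℝ) * (b:ℝ))⁻¹ else 0)
      ≤ if (N:ℤ) < a + b then
          4 / (N:ℝ) * (((a:ℝ))⁻¹ + ((b:ℝ))⁻¹) * (((a + b - N : ℤ) : ℝ))⁻¹ else 0 := by
  by_cases hab : (N:ℤ) < a + b
  · rw [if_pos hab]
    have step1 : ∀ x ∈ Finset.Icc (1:ℤ) N,
        (if (N:ℤ) < a + b ∧ a + b ≤ N + x then (((x:ℝ))^2 * (a:ℝ) * (b:ℝ))⁻¹ else 0)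
        = (if a + b - N ≤ x then ((a:ℝ))⁻¹ * ((b:ℝ))⁻¹ * (((x:ℝ))^2)⁻¹ else 0) := by
      intro x _
      by_cases hx : a + b - N ≤ x
      · rw [if_pos hx, if_pos ⟨hab, by omega⟩, mul_inv, mul_inv]; ring
      · rw [if_neg hx, if_neg (fun hh : _ ∧ _ => hx (by omega))]
    rw [Finset.sum_congr rfl step1, Finset.sum_ite, Finset.sum_const_zero, add_zero,
      show ((Finset.Icc (1:ℤ) N).filter fun x => a + b - N ≤ x) = Finset.Icc (a+b-N) N by
        ext x; simp only [Finset.mem_filter, Finset.mem_Icc]; omega,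
      ← Finset.mul_sum]
    have hA : (0:ℝ) < (a:ℝ) := by exact_mod_cast ha
    have hB : (0:ℝ) < (b:ℝ) := by exact_mod_cast hb
    have hK : (0:ℝ) < ((a + b - N : ℤ) : ℝ) := by exact_mod_cast (by omega : (0:ℤ) < a + b - N)
    have hN' : (0:ℝ) < (N:ℝ) := by exact_mod_cast hN
    calc ((a:ℝ))⁻¹ * ((b:ℝ))⁻¹ * ∑ x ∈ Finset.Icc (a+b-N) N, (((x:ℝ))^2)⁻¹
        ≤ ((a:ℝ))⁻¹ * ((b:ℝ))⁻¹ * (2 / ((a + b - N : ℤ) : ℝ)) := by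
          apply mul_le_mul_of_nonneg_left (L1 _ _ (by omega)) (by positivity)
      _ ≤ 4 / (N:ℝ) * (((a:ℝ))⁻¹ + ((b:ℝ))⁻¹) * (((a + b - N : ℤ) : ℝ))⁻¹ := by
          apply key_ineq hA hB hK hN'
          have : (a:ℝ) + (b:ℝ) = ((a + b : ℤ) : ℝ) := by push_cast; ring
          rw [this]
          exact_mod_cast hab
  · rw [if_neg hab]
    apply le_of_eq
    apply Finset.sum_eq_zero
    intro x _
    exact if_neg (fun hh => hab hh.1)

lemma grid_bound (N : ℕ) (hN : 1 ≤ N) :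
    ∑ p ∈ ((Finset.Icc (1:ℤ) (N:ℤ)) ×ˢ ((Finset.Icc (1:ℤ) (N:ℤ)) ×ˢ (Finset.Icc (1:ℤ) (N:ℤ)))).filter
        (fun p => (N:ℤ) < p.2.1 + p.2.2 ∧ p.2.1 + p.2.2 ≤ (N:ℤ) + p.1),
      ((((p.1:ℝ))^2 * ((p.2.1:ℝ)) * ((p.2.2:ℝ)))⁻¹)
      ≤ 8 * (1 + Real.log N)^2 / N := by
  set H : ℝ := ∑ t ∈ Finset.Icc (1:ℤ) (N:ℤ), ((t : ℝ))⁻¹ with hH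
  have hH0 : 0 ≤ H := by
    apply Finset.sum_nonneg
    intro t ht
    simp only [Finset.mem_Icc] at ht
    have : (0:ℝ) < (t:ℝ) := by exact_mod_cast (by omega : (0:ℤ) < t)
    positivity
  have hN' : (0:ℝ) < (N:ℝ) := by exact_mod_cast hN
  have step1 : ∑ p ∈ ((Finset.Icc (1:ℤ) (N:ℤ)) ×ˢ ((Finset.Icc (1:ℤ) (N:ℤ)) ×ˢ (Finset.Icc (1:ℤ) (N:ℤ)))).filter
        (fun p => (N:ℤ) < p.2.1 + p.2.2 ∧ p.2.1 + p.2.2 ≤ (N:ℤ) + p.1),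
      ((((p.1:ℝ))^2 * ((p.2.1:ℝ)) * ((p.2.2:ℝ)))⁻¹)
      = ∑ q ∈ (Finset.Icc (1:ℤ) (N:ℤ)) ×ˢ (Finset.Icc (1:ℤ) (N:ℤ)),
          ∑ x ∈ Finset.Icc (1:ℤ) (N:ℤ),
            (if (N:ℤ) < q.1 + q.2 ∧ q.1 + q.2 ≤ (N:ℤ) + x
              then (((x:ℝ))^2 * ((q.1:ℝ)) * ((q.2:ℝ)))⁻¹ else 0) := by
    rw [Finset.sum_filter, Finset.sum_product]
    exact Finset.sum_comm
  rw [step1]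
  have step2 : ∑ q ∈ (Finset.Icc (1:ℤ) (N:ℤ)) ×ˢ (Finset.Icc (1:ℤ) (N:ℤ)),
          ∑ x ∈ Finset.Icc (1:ℤ) (N:ℤ),
            (if (N:ℤ) < q.1 + q.2 ∧ q.1 + q.2 ≤ (N:ℤ) + x
              then (((x:ℝ))^2 * ((q.1:ℝ)) * ((q.2:ℝ)))⁻¹ else 0)
      ≤ ∑ q ∈ (Finset.Icc (1:ℤ) (N:ℤ)) ×ˢ (Finset.Icc (1:ℤ) (N:ℤ)),
          (if (N:ℤ) < q.1 + q.2 then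
            4 / (N:ℝ) * (((q.1:ℝ))⁻¹ + ((q.2:ℝ))⁻¹) * (((q.1 + q.2 - N : ℤ) : ℝ))⁻¹ else 0) := by
    apply Finset.sum_le_sum
    intro q hq
    simp only [Finset.mem_product, Finset.mem_Icc] at hq
    exact inner_x_bound N q.1 q.2 hq.1.1 hq.2.1 (by exact_mod_cast hN)
  refine le_trans step2 ?_
  have split : ∀ q : ℤ × ℤ,
      (if (N:ℤ) < q.1 + q.2 then
        4 / (N:ℝ) * (((q.1:ℝ))⁻¹ + ((q.2:ℝ))⁻¹) * (((q.1 + q.2 - N : ℤ) : ℝ))⁻¹ else 0)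
      = 4 / (N:ℝ) * (if (N:ℤ) < q.1 + q.2 then ((q.1:ℝ))⁻¹ * (((q.1 + q.2 - N : ℤ) : ℝ))⁻¹ else 0)
        + 4 / (N:ℝ) * (if (N:ℤ) < q.1 + q.2 then ((q.2:ℝ))⁻¹ * (((q.1 + q.2 - N : ℤ) : ℝ))⁻¹ else 0) := by
    intro q
    split_ifs with h
    · ring
    · simp
  rw [Finset.sum_congr rfl (fun q _ => split q), Finset.sum_add_distrib,
    ← Finset.mul_sum, ← Finset.mul_sum]
  have boundA : ∑ q ∈ (Finset.Icc (1:ℤ) (N:ℤ)) ×ˢ (Finset.Icc (1:ℤ) (N:ℤ)),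
      (if (N:ℤ) < q.1 + q.2 then ((q.1:ℝ))⁻¹ * (((q.1 + q.2 - N : ℤ) : ℝ))⁻¹ else 0) ≤ H * H := by
    rw [Finset.sum_product]
    have inner : ∀ a ∈ Finset.Icc (1:ℤ) (N:ℤ),
        ∑ b ∈ Finset.Icc (1:ℤ) (N:ℤ),
          (if (N:ℤ) < a + b then ((a:ℝ))⁻¹ * (((a + b - N : ℤ) : ℝ))⁻¹ else 0)
        ≤ ((a:ℝ))⁻¹ * H := by
      intro a ha
      simp only [Finset.mem_Icc] at ha
      have e : ∀ b : ℤ, (if (N:ℤ) < a + b then ((a:ℝ))⁻¹ * (((a + b - N : ℤ) : ℝ))⁻¹ else 0)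
          = ((a:ℝ))⁻¹ * (if (N:ℤ) < a + b then (((a + b - N : ℤ) : ℝ))⁻¹ else 0) := by
        intro b; split_ifs <;> simp
      rw [Finset.sum_congr rfl (fun b _ => e b), ← Finset.mul_sum]
      have ha0 : (0:ℝ) ≤ ((a:ℝ))⁻¹ := by
        have : (0:ℝ) < (a:ℝ) := by exact_mod_cast (by omega : (0:ℤ) < a)
        positivity
      exact mul_le_mul_of_nonneg_left (inner_claim (N:ℤ) a ha.2) ha0
    calc ∑ a ∈ Finset.Icc (1:ℤ) (N:ℤ), ∑ b ∈ Finset.Icc (1:ℤ) (N:ℤ),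
          (if (N:ℤ) < a + b then ((a:ℝ))⁻¹ * (((a + b - N : ℤ) : ℝ))⁻¹ else 0)
        ≤ ∑ a ∈ Finset.Icc (1:ℤ) (N:ℤ), ((a:ℝ))⁻¹ * H := Finset.sum_le_sum inner
      _ = H * H := by rw [← Finset.sum_mul]
  have boundB : ∑ q ∈ (Finset.Icc (1:ℤ) (N:ℤ)) ×ˢ (Finset.Icc (1:ℤ) (N:ℤ)),
      (if (N:ℤ) < q.1 + q.2 then ((q.2:ℝ))⁻¹ * (((q.1 + q.2 - N : ℤ) : ℝ))⁻¹ else 0) ≤ H * H := by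
    rw [Finset.sum_product, Finset.sum_comm]
    have inner : ∀ b ∈ Finset.Icc (1:ℤ) (N:ℤ),
        ∑ a ∈ Finset.Icc (1:ℤ) (N:ℤ),
          (if (N:ℤ) < a + b then ((b:ℝ))⁻¹ * (((a + b - N : ℤ) : ℝ))⁻¹ else 0)
        ≤ ((b:ℝ))⁻¹ * H := by
      intro b hb
      simp only [Finset.mem_Icc] at hb
      have e : ∀ a : ℤ, (if (N:ℤ) < a + b then ((b:ℝ))⁻¹ * (((a + b - N : ℤ) : ℝ))⁻¹ else 0)
          = ((b:ℝ))⁻¹ * (if (N:ℤ) < b + a then (((b + a - N : ℤ) : ℝ))⁻¹ else 0) := by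
        intro a
        rw [add_comm b a]
        split_ifs <;> simp
      rw [Finset.sum_congr rfl (fun a _ => e a), ← Finset.mul_sum]
      have hb0 : (0:ℝ) ≤ ((b:ℝ))⁻¹ := by
        have : (0:ℝ) < (b:ℝ) := by exact_mod_cast (by omega : (0:ℤ) < b)
        positivity
      exact mul_le_mul_of_nonneg_left (inner_claim (N:ℤ) b hb.2) hb0
    calc ∑ b ∈ Finset.Icc (1:ℤ) (N:ℤ), ∑ a ∈ Finset.Icc (1:ℤ) (N:ℤ),
          (if (N:ℤ) < a + b then ((b:ℝ))⁻¹ * (((a + b - N : ℤ) : ℝ))⁻¹ else 0)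
        ≤ ∑ b ∈ Finset.Icc (1:ℤ) (N:ℤ), ((b:ℝ))⁻¹ * H := Finset.sum_le_sum inner
      _ = H * H := by rw [← Finset.sum_mul]
  have hHlog : H ≤ 1 + Real.log N := L2 N
  have hlog0 : 0 ≤ 1 + Real.log N := le_trans hH0 hHlog
  calc 4 / (N:ℝ) * _ + 4 / (N:ℝ) * _
      ≤ 4 / (N:ℝ) * (H * H) + 4 / (N:ℝ) * (H * H) := by
        have h4 : (0:ℝ) ≤ 4 / (N:ℝ) := by positivity
        exact add_le_add (mul_le_mul_of_nonneg_left boundA h4)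
          (mul_le_mul_of_nonneg_left boundB h4)
    _ = 8 * (H * H) / N := by ring
    _ ≤ 8 * (1 + Real.log N)^2 / N := by
        have h2 : H * H ≤ (1 + Real.log N)^2 := by nlinarith
        exact (div_le_div_iff_of_pos_right hN').mpr (by nlinarith)

lemma S_bound (N : ℕ) (hN : 1 ≤ N) :
    ∑ j ∈ (Fintype.piFinset (fun _ : Fin 4 => Finset.Icc (-(N : ℤ)) N)).filter
        (fun j => (∀ k, j k ≠ 0) ∧ (∑ k, j k = 0) ∧
          0 < j 0 ∧ 0 < j 1 ∧ j 2 < 0 ∧ j 3 < 0 ∧ |j 2 + j 3| > (N : ℤ)),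
      (1 / (|(j 0 : ℝ)| ^ 2 * |(j 2 : ℝ)| * |(j 3 : ℝ)|))
      ≤ 8 * (1 + Real.log N)^2 / N := by
  classical
  set s := (Fintype.piFinset (fun _ : Fin 4 => Finset.Icc (-(N : ℤ)) N)).filter
        (fun j => (∀ k, j k ≠ 0) ∧ (∑ k, j k = 0) ∧
          0 < j 0 ∧ 0 < j 1 ∧ j 2 < 0 ∧ j 3 < 0 ∧ |j 2 + j 3| > (N : ℤ)) with hs
  have hmem : ∀ j ∈ s, (∀ k, -(N:ℤ) ≤ j k ∧ j k ≤ N) ∧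
      (j 0 + j 1 + j 2 + j 3 = 0) ∧ 0 < j 0 ∧ 0 < j 1 ∧ j 2 < 0 ∧ j 3 < 0 ∧
      (N:ℤ) < -(j 2 + j 3) := by
    intro j hj
    rw [hs, Finset.mem_filter] at hj
    obtain ⟨hpi, hne, hsum, h0, h1, h2, h3, habs⟩ := hj
    rw [Fintype.mem_piFinset] at hpi
    refine ⟨fun k => Finset.mem_Icc.mp (hpi k), ?_, h0, h1, h2, h3, ?_⟩
    · rw [Fin.sum_univ_four] at hsum; linarith
    · rwa [abs_of_neg (by omega)] at habs
  have hinj : ∀ x ∈ s, ∀ y ∈ s, (fun j : Fin 4 → ℤ => (j 0, -(j 2), -(j 3))) x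
      = (fun j : Fin 4 → ℤ => (j 0, -(j 2), -(j 3))) y → x = y := by
    intro x hx y hy hxy
    simp only [Prod.mk.injEq] at hxy
    obtain ⟨e0, e2, e3⟩ := hxy
    have hx' := (hmem x hx).2.1
    have hy' := (hmem y hy).2.1
    have k1 : x 1 = y 1 := by omega
    have k2 : x 2 = y 2 := by omega
    have k3 : x 3 = y 3 := by omega
    funext k
    fin_cases k
    · exact e0
    · exact k1
    · exact k2
    · exact k3
  have himg : ∑ j ∈ s, (1 / (|(j 0 : ℝ)| ^ 2 * |(j 2 : ℝ)| * |(j 3 : ℝ)|))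
      = ∑ p ∈ s.image (fun j : Fin 4 → ℤ => (j 0, -(j 2), -(j 3))),
          ((((p.1:ℝ))^2 * ((p.2.1:ℝ)) * ((p.2.2:ℝ)))⁻¹) := by
    rw [Finset.sum_image hinj]
    apply Finset.sum_congr rfl
    intro j hj
    obtain ⟨hbd, hsum, h0, h1, h2, h3, hab⟩ := hmem j hj
    have a0 : |(j 0 : ℝ)| = ((j 0 : ℤ) : ℝ) := by
      rw [abs_of_pos]; exact_mod_cast h0
    have a2 : |(j 2 : ℝ)| = ((-(j 2) : ℤ) : ℝ) := by
      push_cast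
      rw [abs_of_neg]; exact_mod_cast h2
    have a3 : |(j 3 : ℝ)| = ((-(j 3) : ℤ) : ℝ) := by
      push_cast
      rw [abs_of_neg]; exact_mod_cast h3
    rw [a0, a2, a3, one_div]
  rw [himg]
  refine le_trans ?_ (grid_bound N hN)
  apply Finset.sum_le_sum_of_subset_of_nonneg
  · intro p hp
    obtain ⟨j, hj, rfl⟩ := Finset.mem_image.mp hp
    obtain ⟨hbd, hsum, h0, h1, h2, h3, hab⟩ := hmem j hj
    have b0 := hbd 0
    have b1 := hbd 1
    have b2 := hbd 2
    have b3 := hbd 3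
    simp only [Finset.mem_filter, Finset.mem_product, Finset.mem_Icc]
    refine ⟨⟨⟨by omega, by omega⟩, ⟨by omega, by omega⟩, by omega, by omega⟩, by omega, by omega⟩
  · intro p hp _
    simp only [Finset.mem_filter, Finset.mem_product, Finset.mem_Icc] at hp
    have c1 : (0:ℝ) < (p.1:ℝ) := by exact_mod_cast (by omega : (0:ℤ) < p.1)
    have c2 : (0:ℝ) < (p.2.1:ℝ) := by exact_mod_cast (by omega : (0:ℤ) < p.2.1)
    have c3 : (0:ℝ) < (p.2.2:ℝ) := by exact_mod_cast (by omega : (0:ℤ) < p.2.2)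
    positivity

section Aux

variable {Ω : Type*} [MeasurableSpace Ω] {p : Measure Ω} [IsProbabilityMeasure p]
  (G : GaussianData Ω p)

lemma g_meas (n : ℤ) (hn : n ≠ 0) : Measurable (G.g n) := by
  rcases hn.lt_or_gt with h | h
  · have hpos : 0 < -n := by omega
    have e : G.g n = fun ω => starRingEnd ℂ (G.g (-n) ω) := by
      funext ω
      have := G.g_neg (-n) hpos ω
      rwa [neg_neg] at this
    rw [e]
    exact (continuous_star.measurable).comp (by
      have e2 : G.g (-n) = fun ω => (G.c : ℂ) * ((G.h (-n) ω : ℂ) + Complex.I * (G.l (-n) ω : ℂ)) := by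
        funext ω; exact G.g_def (-n) hpos ω
      rw [e2]
      exact measurable_const.mul ((Complex.measurable_ofReal.comp (G.h_meas _ hpos)).add
        (measurable_const.mul (Complex.measurable_ofReal.comp (G.l_meas _ hpos)))))
  · have e2 : G.g n = fun ω => (G.c : ℂ) * ((G.h n ω : ℂ) + Complex.I * (G.l n ω : ℂ)) := by
      funext ω; exact G.g_def n h ω
    rw [e2]
    exact measurable_const.mul ((Complex.measurable_ofReal.comp (G.h_meas _ h)).add
      (measurable_const.mul (Complex.measurable_ofReal.comp (G.l_meas _ h))))

lemma integrable_pow8_gaussian : Integrable (fun x : ℝ => x ^ 8) (gaussianReal 0 1) := by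
  rw [gaussianReal_of_var_ne_zero 0 one_ne_zero]
  rw [integrable_withDensity_iff (measurable_gaussianPDF 0 1)
    (Filter.Eventually.of_forall fun x => ENNReal.ofReal_lt_top)]
  have e : ∀ x : ℝ, x ^ 8 * (gaussianPDF 0 1 x).toReal
      = (Real.sqrt (2 * Real.pi))⁻¹ * (x ^ 8 * Real.exp (-(2:ℝ)⁻¹ * x ^ 2)) := by
    intro x
    rw [gaussianPDF, ENNReal.toReal_ofReal (gaussianPDFReal_nonneg 0 1 x), gaussianPDFReal]
    push_cast
    ring_nf
  refine (Integrable.const_mul ?_ _).congr (Filter.Eventually.of_forall fun x => (e x).symm)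
  have key := integrable_rpow_mul_exp_neg_mul_sq (b := (2:ℝ)⁻¹) (by norm_num) (s := 8) (by norm_num)
  refine key.congr (Filter.Eventually.of_forall fun x => ?_)
  show x ^ (8:ℝ) * Real.exp (-2⁻¹ * x ^ 2) = x ^ (8:ℕ) * Real.exp (-2⁻¹ * x ^ 2)
  rw [show (8:ℝ) = ((8:ℕ):ℝ) by norm_num, Real.rpow_natCast]

noncomputable def M8 : ℝ := ∫ x, x ^ 8 ∂(gaussianReal 0 1)

lemma M8_nonneg : 0 ≤ M8 :=
  integral_nonneg (fun x => by positivity)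

lemma integrable_h8 (n : ℤ) (hn : 0 < n) : Integrable (fun ω => (G.h n ω) ^ 8) p := by
  have key := (integrable_map_measure
    (f := G.h n) (g := fun x : ℝ => x ^ 8)
    (by measurability) (G.h_meas n hn).aemeasurable).mp
  rw [G.h_law n hn] at key
  exact key integrable_pow8_gaussian

lemma integral_h8 (n : ℤ) (hn : 0 < n) : ∫ ω, (G.h n ω) ^ 8 ∂p = M8 := by
  rw [M8, ← G.h_law n hn, integral_map (G.h_meas n hn).aemeasurable (by measurability)]

lemma integrable_l8 (n : ℤ) (hn : 0 < n) : Integrable (fun ω => (G.l n ω) ^ 8) p := by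
  have key := (integrable_map_measure
    (f := G.l n) (g := fun x : ℝ => x ^ 8)
    (by measurability) (G.l_meas n hn).aemeasurable).mp
  rw [G.l_law n hn] at key
  exact key integrable_pow8_gaussian

lemma integral_l8 (n : ℤ) (hn : 0 < n) : ∫ ω, (G.l n ω) ^ 8 ∂p = M8 := by
  rw [M8, ← G.l_law n hn, integral_map (G.l_meas n hn).aemeasurable (by measurability)]

lemma abs_g_sq (n : ℤ) (hn : 0 < n) (ω : Ω) :
    (norm (G.g n ω)) ^ 2 = G.c ^ 2 * ((G.h n ω) ^ 2 + (G.l n ω) ^ 2) := by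
  rw [G.g_def n hn ω, ← Complex.normSq_eq_norm_sq]
  rw [Complex.normSq_apply]
  simp [Complex.add_re, Complex.add_im, Complex.mul_re, Complex.mul_im,
    Complex.I_re, Complex.I_im, Complex.ofReal_re, Complex.ofReal_im]
  ring

lemma abs_g_neg_eq (n : ℤ) (hn : n < 0) (ω : Ω) :
    norm (G.g n ω) = norm (G.g (-n) ω) := by
  have := G.g_neg (-n) (by omega) ω
  rw [neg_neg] at this
  rw [this, Complex.norm_conj]

lemma g8_bound (n : ℤ) (hn : 0 < n) (ω : Ω) :
    (norm (G.g n ω)) ^ 8 ≤ 8 * G.c ^ 8 * ((G.h n ω) ^ 8 + (G.l n ω) ^ 8) := by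
  have e : (norm (G.g n ω)) ^ 8 = ((norm (G.g n ω)) ^ 2) ^ 4 := by ring
  rw [e, abs_g_sq G n hn ω]
  have hc := G.c_pos
  set u := G.h n ω
  set v := G.l n ω
  have h1 : (G.c ^ 2 * (u ^ 2 + v ^ 2)) ^ 4 = G.c ^ 8 * (u ^ 2 + v ^ 2) ^ 4 := by ring
  rw [h1]
  have h2 : (u ^ 2 + v ^ 2) ^ 4 ≤ 8 * (u ^ 8 + v ^ 8) := by nlinarith [sq_nonneg (u^2 - v^2), sq_nonneg (u^4 - v^4), sq_nonneg u, sq_nonneg v, sq_nonneg (u*v), sq_nonneg (u^2*v^2), sq_nonneg (u^3*v), sq_nonneg (u*v^3)]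
  nlinarith [pow_pos hc 8]

end Aux

section Aux2
variable {Ω : Type*} [MeasurableSpace Ω] {p : Measure Ω} [IsProbabilityMeasure p]
  (G : GaussianData Ω p)

lemma g8_meas (n : ℤ) (hn : n ≠ 0) :
    Measurable (fun ω => (norm (G.g n ω)) ^ 8) :=
  (continuous_norm.measurable.comp (g_meas G n hn)).pow_const 8

lemma g8_int_pos (n : ℤ) (hn : 0 < n) :
    Integrable (fun ω => (norm (G.g n ω)) ^ 8) p := by
  refine Integrable.mono' (g := fun ω => 8 * G.c ^ 8 * ((G.h n ω) ^ 8 + (G.l n ω) ^ 8))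
    (((integrable_h8 G n hn).add (integrable_l8 G n hn)).const_mul _)
    (g8_meas G n (by omega)).aestronglyMeasurable
    (Filter.Eventually.of_forall fun ω => ?_)
  rw [Real.norm_of_nonneg (by positivity)]
  exact g8_bound G n hn ω

lemma g8_int (n : ℤ) (hn : n ≠ 0) :
    Integrable (fun ω => (norm (G.g n ω)) ^ 8) p := by
  rcases hn.lt_or_gt with h | h
  · have e : (fun ω => (norm (G.g n ω)) ^ 8)
        = fun ω => (norm (G.g (-n) ω)) ^ 8 := by
      funext ω; rw [abs_g_neg_eq G n h ω]
    rw [e]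
    exact g8_int_pos G (-n) (by omega)
  · exact g8_int_pos G n h

lemma g8_integral_le_pos (n : ℤ) (hn : 0 < n) :
    ∫ ω, (norm (G.g n ω)) ^ 8 ∂p ≤ 16 * G.c ^ 8 * M8 := by
  have step : ∫ ω, (norm (G.g n ω)) ^ 8 ∂p
      ≤ ∫ ω, 8 * G.c ^ 8 * ((G.h n ω) ^ 8 + (G.l n ω) ^ 8) ∂p := by
    apply integral_mono_of_nonneg (Filter.Eventually.of_forall fun ω => by positivity)
      (((integrable_h8 G n hn).add (integrable_l8 G n hn)).const_mul _)
      (Filter.Eventually.of_forall fun ω => g8_bound G n hn ω)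
  refine step.trans ?_
  rw [integral_const_mul, integral_add (integrable_h8 G n hn) (integrable_l8 G n hn),
    integral_h8 G n hn, integral_l8 G n hn]
  ring_nf
  exact le_refl _

lemma g8_integral_le (n : ℤ) (hn : n ≠ 0) :
    ∫ ω, (norm (G.g n ω)) ^ 8 ∂p ≤ 16 * G.c ^ 8 * M8 := by
  rcases hn.lt_or_gt with h | h
  · have e : (fun ω => (norm (G.g n ω)) ^ 8)
        = fun ω => (norm (G.g (-n) ω)) ^ 8 := by
      funext ω; rw [abs_g_neg_eq G n h ω]
    rw [e]
    exact g8_integral_le_pos G (-n) (by omega)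
  · exact g8_integral_le_pos G n h

lemma Y_pointwise (j : Fin 4 → ℤ) (ω : Ω) :
    (norm (∏ k, G.g (j k) ω)) ^ 2
      ≤ 1/4 * ∑ k, (norm (G.g (j k) ω)) ^ 8 := by
  rw [Complex.norm_prod]
  rw [Fin.prod_univ_four, Fin.sum_univ_four]
  set a0 := norm (G.g (j 0) ω)
  set a1 := norm (G.g (j 1) ω)
  set a2 := norm (G.g (j 2) ω)
  set a3 := norm (G.g (j 3) ω)
  have h0 : 0 ≤ a0 := norm_nonneg _
  have h1 : 0 ≤ a1 := norm_nonneg _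
  have h2 : 0 ≤ a2 := norm_nonneg _
  have h3 : 0 ≤ a3 := norm_nonneg _
  nlinarith [sq_nonneg ((a0*a1)^2 - (a2*a3)^2), sq_nonneg (a0^4 - a1^4), sq_nonneg (a2^4 - a3^4),
    mul_nonneg (mul_nonneg h0 h1) (mul_nonneg h2 h3), sq_nonneg (a0*a1), sq_nonneg (a2*a3)]

lemma Y_meas (j : Fin 4 → ℤ) (hj : ∀ k, j k ≠ 0) :
    Measurable (fun ω => (norm (∏ k, G.g (j k) ω)) ^ 2) := by
  have : Measurable (fun ω => ∏ k, G.g (j k) ω) :=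
    Finset.measurable_prod _ (fun k _ => g_meas G (j k) (hj k))
  exact (continuous_norm.measurable.comp this).pow_const 2

lemma Y_integrable (j : Fin 4 → ℤ) (hj : ∀ k, j k ≠ 0) :
    Integrable (fun ω => (norm (∏ k, G.g (j k) ω)) ^ 2) p := by
  refine Integrable.mono' (g := fun ω => 1/4 * ∑ k, (norm (G.g (j k) ω)) ^ 8)
    ((integrable_finset_sum _ (fun k _ => g8_int G (j k) (hj k))).const_mul _)
    (Y_meas G j hj).aestronglyMeasurable
    (Filter.Eventually.of_forall fun ω => ?_)
  rw [Real.norm_of_nonneg (by positivity)]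
  exact Y_pointwise G j ω

lemma Y_integral_le (j : Fin 4 → ℤ) (hj : ∀ k, j k ≠ 0) :
    ∫ ω, (norm (∏ k, G.g (j k) ω)) ^ 2 ∂p ≤ 16 * G.c ^ 8 * M8 := by
  have step : ∫ ω, (norm (∏ k, G.g (j k) ω)) ^ 2 ∂p
      ≤ ∫ ω, 1/4 * ∑ k, (norm (G.g (j k) ω)) ^ 8 ∂p :=
    integral_mono_of_nonneg (Filter.Eventually.of_forall fun ω => by positivity)
      ((integrable_finset_sum _ (fun k _ => g8_int G (j k) (hj k))).const_mul _)
      (Filter.Eventually.of_forall fun ω => Y_pointwise G j ω)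
  refine step.trans ?_
  rw [integral_const_mul, integral_finset_sum _ (fun k _ => g8_int G (j k) (hj k))]
  have : ∑ k : Fin 4, ∫ ω, (norm (G.g (j k) ω)) ^ 8 ∂p
      ≤ ∑ k : Fin 4, 16 * G.c ^ 8 * M8 :=
    Finset.sum_le_sum (fun k _ => g8_integral_le G (j k) (hj k))
  rw [Finset.sum_const] at this
  simp only [Finset.card_univ, Fintype.card_fin, nsmul_eq_mul] at this
  push_cast at this
  linarith

end Aux2

section Main
variable {Ω : Type*} [MeasurableSpace Ω] {p : Measure Ω} [IsProbabilityMeasure p]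
  (G : GaussianData Ω p)

lemma TN_bound (N : ℕ) :
    ∫ ω, (norm
        (∑ j ∈ (Fintype.piFinset (fun _ : Fin 4 => Finset.Icc (-(N : ℤ)) N)).filter
            (fun j => (∀ k, j k ≠ 0) ∧ (∑ k, j k = 0) ∧
              0 < j 0 ∧ 0 < j 1 ∧ j 2 < 0 ∧ j 3 < 0 ∧ |j 2 + j 3| > (N : ℤ)),
          ((1 / (|(j 0 : ℝ)| ^ 2 * |(j 2 : ℝ)| * |(j 3 : ℝ)|) : ℝ) : ℂ) *
            ∏ k, G.g (j k) ω)) ^ 2 ∂p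
      ≤ (16 * G.c ^ 8 * M8) *
        (∑ j ∈ (Fintype.piFinset (fun _ : Fin 4 => Finset.Icc (-(N : ℤ)) N)).filter
            (fun j => (∀ k, j k ≠ 0) ∧ (∑ k, j k = 0) ∧
              0 < j 0 ∧ 0 < j 1 ∧ j 2 < 0 ∧ j 3 < 0 ∧ |j 2 + j 3| > (N : ℤ)),
          (1 / (|(j 0 : ℝ)| ^ 2 * |(j 2 : ℝ)| * |(j 3 : ℝ)|))) ^ 2 := by
  classical
  set s := (Fintype.piFinset (fun _ : Fin 4 => Finset.Icc (-(N : ℤ)) N)).filter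
            (fun j => (∀ k, j k ≠ 0) ∧ (∑ k, j k = 0) ∧
              0 < j 0 ∧ 0 < j 1 ∧ j 2 < 0 ∧ j 3 < 0 ∧ |j 2 + j 3| > (N : ℤ)) with hs
  set cf : (Fin 4 → ℤ) → ℝ :=
    fun j => 1 / (|(j 0 : ℝ)| ^ 2 * |(j 2 : ℝ)| * |(j 3 : ℝ)|) with hcf
  have hc0 : ∀ j, 0 ≤ cf j := fun j => by rw [hcf]; positivity
  set S : ℝ := ∑ j ∈ s, cf j with hS
  have hS0 : 0 ≤ S := Finset.sum_nonneg (fun j _ => hc0 j)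
  have hjne : ∀ j ∈ s, ∀ k, j k ≠ 0 := by
    intro j hj
    rw [hs, Finset.mem_filter] at hj
    exact hj.2.1
  have hpoint : ∀ ω, (norm (∑ j ∈ s, ((cf j : ℝ) : ℂ) * ∏ k, G.g (j k) ω)) ^ 2
      ≤ S * ∑ j ∈ s, cf j * (norm (∏ k, G.g (j k) ω)) ^ 2 := by
    intro ω
    have step1 : norm (∑ j ∈ s, ((cf j : ℝ) : ℂ) * ∏ k, G.g (j k) ω)
        ≤ ∑ j ∈ s, cf j * norm (∏ k, G.g (j k) ω) := by
      refine le_trans (norm_sum_le _ _) (le_of_eq ?_)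
      apply Finset.sum_congr rfl
      intro j _
      rw [norm_mul, Complex.norm_real, Real.norm_eq_abs, abs_of_nonneg (hc0 j)]
    have step2 : (∑ j ∈ s, cf j * norm (∏ k, G.g (j k) ω)) ^ 2
        ≤ S * ∑ j ∈ s, cf j * (norm (∏ k, G.g (j k) ω)) ^ 2 := by
      apply Finset.sum_sq_le_sum_mul_sum_of_sq_eq_mul
      · intro j _; exact hc0 j
      · intro j _; exact mul_nonneg (hc0 j) (by positivity)
      · intro j _; ring
    exact le_trans (pow_le_pow_left₀ (norm_nonneg _) step1 2) step2
  have hint : Integrable (fun ω => S * ∑ j ∈ s, cf j * (norm (∏ k, G.g (j k) ω)) ^ 2) p := by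
    apply Integrable.const_mul
    exact integrable_finset_sum _ (fun j hj => (Y_integrable G j (hjne j hj)).const_mul _)
  calc ∫ ω, (norm (∑ j ∈ s, ((cf j : ℝ) : ℂ) * ∏ k, G.g (j k) ω)) ^ 2 ∂p
      ≤ ∫ ω, S * ∑ j ∈ s, cf j * (norm (∏ k, G.g (j k) ω)) ^ 2 ∂p :=
        integral_mono_of_nonneg (Filter.Eventually.of_forall fun ω => by positivity)
          hint (Filter.Eventually.of_forall hpoint)
    _ = S * ∑ j ∈ s, cf j * ∫ ω, (norm (∏ k, G.g (j k) ω)) ^ 2 ∂p := by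
        rw [integral_const_mul, integral_finset_sum _
          (fun j hj => (Y_integrable G j (hjne j hj)).const_mul _)]
        congr 1
        exact Finset.sum_congr rfl (fun j _ => integral_const_mul _ _)
    _ ≤ S * ∑ j ∈ s, cf j * (16 * G.c ^ 8 * M8) := by
        apply mul_le_mul_of_nonneg_left _ hS0
        exact Finset.sum_le_sum (fun j hj =>
          mul_le_mul_of_nonneg_left (Y_integral_le G j (hjne j hj)) (hc0 j))
    _ = (16 * G.c ^ 8 * M8) * S ^ 2 := by
        rw [← Finset.sum_mul, ← hS]; ring

end Main


/-- The `L²(dp)` norm of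
`T_N = ∑ (1/(|j_1|² |j_3| |j_4|)) g_{j_1} g_{j_2} g_{j_3} g_{j_4}`,
summed over `(j_1,j_2,j_3,j_4) ∈ 𝒜_4` with `0 < |j_k| ≤ N`, `j_1, j_2 > 0`,
`j_3, j_4 < 0` and `|j_3 + j_4| > N`, tends to `0` as `N → ∞`. -/
theorem L2_norm_T_N_tendsto_zero
    {Ω : Type*} [MeasurableSpace Ω] (p : Measure Ω) [IsProbabilityMeasure p]
    (G : GaussianData Ω p) :
    Filter.Tendsto (fun N : ℕ =>
      Real.sqrt (∫ ω, (norm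
        (∑ j ∈ (Fintype.piFinset (fun _ : Fin 4 => Finset.Icc (-(N : ℤ)) N)).filter
            (fun j => (∀ k, j k ≠ 0) ∧ (∑ k, j k = 0) ∧
              0 < j 0 ∧ 0 < j 1 ∧ j 2 < 0 ∧ j 3 < 0 ∧ |j 2 + j 3| > (N : ℤ)),
          ((1 / (|(j 0 : ℝ)| ^ 2 * |(j 2 : ℝ)| * |(j 3 : ℝ)|) : ℝ) : ℂ) *
            ∏ k, G.g (j k) ω)) ^ 2 ∂p))
      Filter.atTop (nhds 0) := by
  classical
  set M : ℝ := 16 * G.c ^ 8 * M8 with hM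
  have hM0 : 0 ≤ M := by
    have := M8_nonneg
    have := G.c_pos
    positivity
  apply squeeze_zero' (Filter.Eventually.of_forall fun N => Real.sqrt_nonneg _)
    (g := fun N : ℕ => Real.sqrt M * (8 * (1 + Real.log N) ^ 2 / N))
  · filter_upwards [Filter.eventually_ge_atTop 1] with N hN
    have h1 := TN_bound G (p := p) N
    have hS0 : (0:ℝ) ≤ ∑ j ∈ (Fintype.piFinset (fun _ : Fin 4 => Finset.Icc (-(N : ℤ)) N)).filter
            (fun j => (∀ k, j k ≠ 0) ∧ (∑ k, j k = 0) ∧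
              0 < j 0 ∧ 0 < j 1 ∧ j 2 < 0 ∧ j 3 < 0 ∧ |j 2 + j 3| > (N : ℤ)),
          (1 / (|(j 0 : ℝ)| ^ 2 * |(j 2 : ℝ)| * |(j 3 : ℝ)|)) :=
      Finset.sum_nonneg (fun j _ => by positivity)
    calc Real.sqrt (∫ ω, (norm _) ^ 2 ∂p)
        ≤ Real.sqrt (M * (∑ j ∈ (Fintype.piFinset (fun _ : Fin 4 => Finset.Icc (-(N : ℤ)) N)).filter
            (fun j => (∀ k, j k ≠ 0) ∧ (∑ k, j k = 0) ∧
              0 < j 0 ∧ 0 < j 1 ∧ j 2 < 0 ∧ j 3 < 0 ∧ |j 2 + j 3| > (N : ℤ)),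
          (1 / (|(j 0 : ℝ)| ^ 2 * |(j 2 : ℝ)| * |(j 3 : ℝ)|))) ^ 2) := Real.sqrt_le_sqrt h1
      _ = Real.sqrt M * (∑ j ∈ (Fintype.piFinset (fun _ : Fin 4 => Finset.Icc (-(N : ℤ)) N)).filter
            (fun j => (∀ k, j k ≠ 0) ∧ (∑ k, j k = 0) ∧
              0 < j 0 ∧ 0 < j 1 ∧ j 2 < 0 ∧ j 3 < 0 ∧ |j 2 + j 3| > (N : ℤ)),
          (1 / (|(j 0 : ℝ)| ^ 2 * |(j 2 : ℝ)| * |(j 3 : ℝ)|))) := by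
          rw [Real.sqrt_mul hM0, Real.sqrt_sq hS0]
      _ ≤ Real.sqrt M * (8 * (1 + Real.log N) ^ 2 / N) :=
          mul_le_mul_of_nonneg_left (S_bound N hN) (Real.sqrt_nonneg _)
  · have hsum : Filter.Tendsto
        (fun x : ℝ => x⁻¹ + 2 * (Real.log x / (1 * x + 0)) + Real.log x ^ 2 / (1 * x + 0))
        Filter.atTop (nhds 0) := by
      have t0 := tendsto_inv_atTop_zero (𝕜 := ℝ)
      have t1 := (Real.tendsto_pow_log_div_mul_add_atTop 1 0 1 one_ne_zero).const_mul (2:ℝ)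
      have t2 := Real.tendsto_pow_log_div_mul_add_atTop 1 0 2 one_ne_zero
      have := (t0.add t1).add t2
      simpa using this
    have heq : (fun x : ℝ => (1 + Real.log x) ^ 2 / x) =ᶠ[Filter.atTop]
        (fun x : ℝ => x⁻¹ + 2 * (Real.log x / (1 * x + 0)) + Real.log x ^ 2 / (1 * x + 0)) := by
      filter_upwards [Filter.eventually_gt_atTop (0:ℝ)] with x hx
      field_simp
      ring
    have hreal : Filter.Tendsto (fun x : ℝ => (1 + Real.log x) ^ 2 / x)
        Filter.atTop (nhds 0) := hsum.congr' heq.symm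
    have hnat := hreal.comp (tendsto_natCast_atTop_atTop (R := ℝ))
    have := hnat.const_mul (Real.sqrt M * 8)
    rw [mul_zero] at this
    apply this.congr
    intro N
    show Real.sqrt M * 8 * ((1 + Real.log N) ^ 2 / N) = _
    ring
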